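/- arXiv:math/0207188 — 2 statements merged into one kernel-verified Lean document; each statement's English description precedes it below -/
import Mathlib

section
/- Let (H,f) be a symmetric bilinear lattice and c, c' characteristic forms for f. If the discriminant quadratic functions φ_{f,c} and φ_{f,c'} on G_f = H^♯/H are equal, then c' ≡ c mod 2f̂(H), i.e. there exists h ∈ H with c'(x) = c(x) + 2f(h,x) for all x ∈ H. (Injectivity of the map Char(f)/2f̂(H) → Quad(L_f).) -/
open scoped TensorProduct

noncomputable section

/-- ℚ/ℤ -/
abbrev QZ : Type := AddCircle (1 : ℚ)

section Lattice

variable {H : Type} [AddCommGroup H]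

/-- canonical map H → ℚ ⊗ H -/
def iotaQ (H : Type) [AddCommGroup H] : H →ₗ[ℤ] ℚ ⊗[ℤ] H :=
  TensorProduct.mk ℤ ℚ H 1

/-- the ℚ-bilinear extension of f to ℚ ⊗ H -/
def fQ (f : H →ₗ[ℤ] H →ₗ[ℤ] ℤ) : (ℚ ⊗[ℤ] H) →ₗ[ℚ] (ℚ ⊗[ℤ] H) →ₗ[ℚ] ℚ :=
  LinearMap.BilinForm.baseChange ℚ f

/-- the ℚ-linear extension of a linear form c : H → ℤ to ℚ ⊗ H -/
def cQ (c : H →ₗ[ℤ] ℤ) : (ℚ ⊗[ℤ] H) →ₗ[ℚ] ℚ :=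
  LinearMap.liftBaseChange ℚ ((Int.castAddHom ℚ).toIntLinearMap ∘ₗ c)

/-- the dual lattice H^♯ = {x ∈ ℚ⊗H : f_ℚ(x, H) ⊆ ℤ} -/
def dualLattice (f : H →ₗ[ℤ] H →ₗ[ℤ] ℤ) : AddSubgroup (ℚ ⊗[ℤ] H) where
  carrier := {x | ∀ h : H, ∃ n : ℤ, fQ f x (iotaQ H h) = (n : ℚ)}
  zero_mem' := fun h => ⟨0, by simp⟩
  add_mem' := by
    rintro x y hx hy h
    obtain ⟨n, hn⟩ := hx h
    obtain ⟨m, hm⟩ := hy h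
    exact ⟨n + m, by push_cast [map_add, LinearMap.add_apply, hn, hm]; ring⟩
  neg_mem' := by
    rintro x hx h
    obtain ⟨n, hn⟩ := hx h
    exact ⟨-n, by push_cast [map_neg, LinearMap.neg_apply, hn]; ring⟩

/-- the image of H, as a subgroup of the dual lattice -/
def latInDual (f : H →ₗ[ℤ] H →ₗ[ℤ] ℤ) : AddSubgroup (dualLattice f) :=
  ((iotaQ H).toAddMonoidHom.range).addSubgroupOf (dualLattice f)

/-- the discriminant group G_f = H^♯/H -/
def Gf (f : H →ₗ[ℤ] H →ₗ[ℤ] ℤ) : Type :=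
  dualLattice f ⧸ latInDual f

instance (f : H →ₗ[ℤ] H →ₗ[ℤ] ℤ) : AddCommGroup (Gf f) :=
  QuotientAddGroup.Quotient.addCommGroup _

/-- the discriminant quadratic function, on representatives:
φ_{f,c}(x) = (1/2)(f_ℚ(x,x) − c_ℚ(x)) mod 1 -/
def phiRep (f : H →ₗ[ℤ] H →ₗ[ℤ] ℤ) (c : H →ₗ[ℤ] ℤ) (x : dualLattice f) : QZ :=
  ((((1 : ℚ)/2) * (fQ f x x - cQ c x) : ℚ) : QZ)

/-- the (preimage in H^♯ of the) radical of L_f -/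
def radSub (f : H →ₗ[ℤ] H →ₗ[ℤ] ℤ) : AddSubgroup (dualLattice f) where
  carrier := {x | ∀ y : dualLattice f, ∃ n : ℤ, fQ f x y = (n : ℚ)}
  zero_mem' := fun y => ⟨0, by simp⟩
  add_mem' := by
    rintro x x' hx hx' y
    obtain ⟨n, hn⟩ := hx y
    obtain ⟨m, hm⟩ := hx' y
    exact ⟨n + m, by push_cast [AddSubgroup.coe_add, map_add, LinearMap.add_apply, hn, hm]; ring⟩
  neg_mem' := by
    rintro x hx y
    obtain ⟨n, hn⟩ := hx y
    exact ⟨-n, by push_cast [AddSubgroup.coe_neg, map_neg, LinearMap.neg_apply, hn]; ring⟩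

end Lattice

section Aux

variable {H : Type} [AddCommGroup H]

lemma cQ_tmul (c : H →ₗ[ℤ] ℤ) (s : ℚ) (h : H) : cQ c (s ⊗ₜ[ℤ] h) = s * (c h : ℚ) := by
  simp [cQ, LinearMap.liftBaseChange_tmul, smul_eq_mul]

lemma fQ_tmul (f : H →ₗ[ℤ] H →ₗ[ℤ] ℤ) (s t : ℚ) (x y : H) :
    fQ f (s ⊗ₜ[ℤ] x) (t ⊗ₜ[ℤ] y) = (f x y : ℚ) * (s * t) := by
  have : fQ f (s ⊗ₜ[ℤ] x) (t ⊗ₜ[ℤ] y) = (f x y) • (s * t) :=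
    LinearMap.BilinForm.baseChange_tmul f s x t y
  rw [this, zsmul_eq_mul]

lemma iotaQ_apply (h : H) : iotaQ H h = (1 : ℚ) ⊗ₜ[ℤ] h := rfl

lemma cQ_comb (c c' d : H →ₗ[ℤ] ℤ) (hd : ∀ x, c' x = c x + 2 * d x) (v : ℚ ⊗[ℤ] H) :
    cQ c' v = cQ c v + 2 * cQ d v := by
  induction v using TensorProduct.induction_on with
  | zero => simp
  | tmul s h => rw [cQ_tmul, cQ_tmul, cQ_tmul, hd h]; push_cast; ring
  | add v w hv hw => rw [map_add, map_add, map_add, hv, hw]; ring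

end Aux

-- STATEMENT 11
theorem stmt11 {H : Type} [AddCommGroup H] [Module.Free ℤ H] [Module.Finite ℤ H]
    (f : H →ₗ[ℤ] H →ₗ[ℤ] ℤ) (hf : ∀ x y, f x y = f y x)
    (c c' : H →ₗ[ℤ] ℤ) (hc : ∀ h : H, (2 : ℤ) ∣ f h h - c h)
    (hc' : ∀ h : H, (2 : ℤ) ∣ f h h - c' h)
    (hphi : ∀ x : dualLattice f, phiRep f c x = phiRep f c' x) :
    ∃ h0 : H, ∀ x : H, c' x = c x + 2 * f h0 x := by
  classical
  -- the half-difference d of c' and c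
  have hdvd : ∀ h : H, (2 : ℤ) ∣ c' h - c h := by
    intro h
    have := dvd_sub (hc h) (hc' h)
    simpa using this
  have key : ∀ x y : H, c' (x + y) - c (x + y) = (c' x - c x) + (c' y - c y) := by
    intro x y; simp [map_add]; ring
  let d : H →ₗ[ℤ] ℤ :=
    { toFun := fun x => (c' x - c x) / 2
      map_add' := by
        intro x y
        obtain ⟨a, ha⟩ := hdvd x
        obtain ⟨b, hb⟩ := hdvd y
        show (c' (x + y) - c (x + y)) / 2 = (c' x - c x) / 2 + (c' y - c y) / 2
        rw [key x y, ha, hb, ← mul_add, Int.mul_ediv_cancel_left _ two_ne_zero,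
          Int.mul_ediv_cancel_left _ two_ne_zero, Int.mul_ediv_cancel_left _ two_ne_zero]
      map_smul' := by
        intro n x
        obtain ⟨a, ha⟩ := hdvd x
        have : c' (n • x) - c (n • x) = 2 * (n * a) := by
          simp [map_smul, smul_eq_mul]
          rw [← mul_sub, ha]; ring
        show (c' (n • x) - c (n • x)) / 2 = (RingHom.id ℤ) n • ((c' x - c x) / 2)
        rw [this, ha, Int.mul_ediv_cancel_left _ two_ne_zero,
          Int.mul_ediv_cancel_left _ two_ne_zero]
        simp }
  have hd : ∀ x : H, c' x = c x + 2 * d x := by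
    intro x
    obtain ⟨a, ha⟩ := hdvd x
    have : d x = a := by
      show (c' x - c x) / 2 = a
      rw [ha, Int.mul_ediv_cancel_left _ two_ne_zero]
    rw [this]; omega
  -- from hphi : cQ d is integral on the dual lattice
  have hint : ∀ x : dualLattice f, ∃ k : ℤ, cQ d (x : ℚ ⊗[ℤ] H) = (k : ℚ) := by
    intro x
    have h1 := hphi x
    rw [phiRep, phiRep, QuotientAddGroup.eq_iff_sub_mem, AddSubgroup.mem_zmultiples_iff] at h1
    obtain ⟨k, hk⟩ := h1
    refine ⟨k, ?_⟩
    rw [zsmul_eq_mul, mul_one] at hk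
    have h2 := cQ_comb c c' d hd (x : ℚ ⊗[ℤ] H)
    linarith [hk, h2]
  -- Smith normal form for the range of f inside the dual module
  obtain ⟨n, snf⟩ := (LinearMap.range f).smithNormalForm
    (Module.Free.chooseBasis ℤ (Module.Dual ℤ H))
  obtain ⟨bM, bN, emb, a, hsnf⟩ := snf
  have ha : ∀ j, a j ≠ 0 := by
    intro j hj
    refine bN.ne_zero j ?_
    have hz : (bN j : Module.Dual ℤ H) = 0 := by rw [hsnf j, hj, zero_smul]
    exact ZeroMemClass.coe_eq_zero.mp hz
  -- the predual basis vectors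
  let e : Module.Free.ChooseBasisIndex ℤ (Module.Dual ℤ H) → H :=
    fun i => (Module.evalEquiv ℤ H).symm (bM.coord i)
  have he : ∀ (φ : Module.Dual ℤ H) i, φ (e i) = bM.repr φ i := by
    intro φ i
    show φ ((Module.evalEquiv ℤ H).symm (bM.coord i)) = _
    rw [Module.apply_evalEquiv_symm_apply, Module.Basis.coord_apply]
  -- membership of scaled predual vectors in the dual lattice
  have mem1 : ∀ (t : ℚ) i, i ∉ Set.range emb → (t ⊗ₜ[ℤ] e i) ∈ dualLattice f := by
    intro t i hi h
    refine ⟨0, ?_⟩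
    have h0 : f (e i) h = 0 := by
      rw [hf]
      have := Module.Basis.SmithNormalForm.repr_eq_zero_of_notMem_range ⟨bM, bN, emb, a, hsnf⟩
        ⟨f h, LinearMap.mem_range_self f h⟩ hi
      rw [← he (f h) i] at this
      exact this
    rw [iotaQ_apply, fQ_tmul, h0]
    simp
  have mem2 : ∀ j : Fin n, ((1 / (a j : ℚ)) ⊗ₜ[ℤ] e (emb j)) ∈ dualLattice f := by
    intro j h
    have hmem : f h ∈ LinearMap.range f := LinearMap.mem_range_self f h
    have hrep := Module.Basis.SmithNormalForm.repr_apply_embedding_eq_repr_smul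
      ⟨bM, bN, emb, a, hsnf⟩ (m := ⟨f h, hmem⟩) (i := j)
    have hrep' : bM.repr (f h) (emb j) = a j * bN.repr ⟨f h, hmem⟩ j := by
      rw [hrep, map_smul]; simp [smul_eq_mul]
    refine ⟨bN.repr ⟨f h, hmem⟩ j, ?_⟩
    rw [iotaQ_apply, fQ_tmul, hf]
    rw [he (f h) (emb j), hrep']
    have haj : (a j : ℚ) ≠ 0 := Int.cast_ne_zero.mpr (ha j)
    push_cast
    field_simp
  -- coordinates of d off the range of emb vanish
  have hzero : ∀ i, i ∉ Set.range emb → bM.repr d i = 0 := by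
    intro i hi
    by_contra hne
    have hde : d (e i) = bM.repr d i := he d i
    obtain ⟨k, hk⟩ := hint ⟨(1 / (2 * (bM.repr d i : ℚ))) ⊗ₜ[ℤ] e i, mem1 _ i hi⟩
    rw [cQ_tmul, hde] at hk
    have hm : ((bM.repr d i : ℤ) : ℚ) ≠ 0 := Int.cast_ne_zero.mpr hne
    have : (k : ℚ) = 1 / 2 := by
      rw [← hk]; field_simp
    have h2 : (2 * k : ℚ) = 1 := by rw [this]; ring
    have : (2 * k : ℤ) = 1 := by exact_mod_cast h2
    omega
  -- coordinates of d on the range of emb are divisible by a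
  have hdvd2 : ∀ j : Fin n, ∃ k : ℤ, bM.repr d (emb j) = a j * k := by
    intro j
    obtain ⟨k, hk⟩ := hint ⟨_, mem2 j⟩
    rw [cQ_tmul, he d (emb j)] at hk
    refine ⟨k, ?_⟩
    have haj : (a j : ℚ) ≠ 0 := Int.cast_ne_zero.mpr (ha j)
    have : (bM.repr d (emb j) : ℚ) = (a j : ℚ) * (k : ℚ) := by
      field_simp at hk
      linarith [hk]
    exact_mod_cast this
  choose k hk using hdvd2
  -- assemble the preimage
  let w : LinearMap.range f := ∑ j, k j • bN j
  have hwd : (w : Module.Dual ℤ H) = d := by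
    apply bM.repr.injective
    ext i
    by_cases hi : i ∈ Set.range emb
    · obtain ⟨j, rfl⟩ := hi
      have h1 := Module.Basis.SmithNormalForm.repr_apply_embedding_eq_repr_smul
        ⟨bM, bN, emb, a, hsnf⟩ (m := w) (i := j)
      have h2 : bN.repr w = k := by
        show bN.repr (∑ j, k j • bN j) = k
        exact bN.repr_sum_self k
      rw [h1, map_smul]
      simp only [Finsupp.smul_apply, smul_eq_mul, h2]
      rw [hk j]
    · rw [Module.Basis.SmithNormalForm.repr_eq_zero_of_notMem_range ⟨bM, bN, emb, a, hsnf⟩ w hi,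
        hzero i hi]
  have : d ∈ LinearMap.range f := hwd ▸ w.2
  obtain ⟨h0, hh0⟩ := this
  exact ⟨h0, fun x => by rw [hd x, ← hh0]⟩
end
end

section
/- Let (H,f) be a symmetric bilinear lattice. There is a short exact sequence 0 → Ker L̂_f → G_f → Tors(Coker f̂) → 0, where the map G_f → Tors(Coker f̂) is induced by restricting the adjoint of f_ℚ to H^♯, and this sequence splits. -/
open scoped TensorProduct

noncomputable section

section Aux

variable {H : Type} [AddCommGroup H]

lemma fQ_iota_iota (f : H →ₗ[ℤ] H →ₗ[ℤ] ℤ) (h k : H) :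
    fQ f (iotaQ H h) (iotaQ H k) = (f h k : ℚ) := by
  simp [fQ, iotaQ_apply, LinearMap.BilinForm.baseChange_tmul, Algebra.smul_def]

lemma cQ_iota (c : H →ₗ[ℤ] ℤ) (h : H) : cQ c (iotaQ H h) = (c h : ℚ) := by
  simp [cQ, iotaQ_apply, LinearMap.liftBaseChange_tmul]

lemma exists_denom (x : ℚ ⊗[ℤ] H) : ∃ n : ℤ, n ≠ 0 ∧ ∃ h : H, (n : ℚ) • x = iotaQ H h := by
  induction x using TensorProduct.induction_on with
  | zero => exact ⟨1, one_ne_zero, 0, by simp⟩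
  | tmul q h =>
    refine ⟨(q.den : ℤ), Int.natCast_ne_zero.mpr q.den_nz, q.num • h, ?_⟩
    rw [iotaQ_apply, TensorProduct.tmul_smul, TensorProduct.smul_tmul', TensorProduct.smul_tmul']
    congr 1
    push_cast
    rw [zsmul_eq_mul, smul_eq_mul, mul_one, mul_comm, Rat.mul_den_eq_num]
  | add x y hx hy =>
    obtain ⟨n, hn, a, ha⟩ := hx
    obtain ⟨m, hm, b, hb⟩ := hy
    refine ⟨n * m, mul_ne_zero hn hm, m • a + n • b, ?_⟩
    rw [map_add, map_smul, map_smul, ← ha, ← hb]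
    push_cast
    rw [smul_add, mul_comm (n:ℚ) (m:ℚ), mul_smul, mul_smul]
    congr 1
    · rw [← Int.cast_smul_eq_zsmul ℚ n ((m:ℚ) • y), smul_comm]

lemma eq_on_lattice {φ φ' : (ℚ ⊗[ℤ] H) →ₗ[ℚ] ℚ}
    (hh : ∀ k, φ (iotaQ H k) = φ' (iotaQ H k)) (x : ℚ ⊗[ℤ] H) : φ x = φ' x := by
  obtain ⟨n, hn, h, hxh⟩ := exists_denom x
  have h1 : φ ((n:ℚ) • x) = φ' ((n:ℚ) • x) := by rw [hxh]; exact hh h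
  rw [map_smul, map_smul, smul_eq_mul, smul_eq_mul] at h1
  have hq : (n : ℚ) ≠ 0 := Int.cast_ne_zero.mpr hn
  exact mul_left_cancel₀ hq h1

lemma fQ_symm (f : H →ₗ[ℤ] H →ₗ[ℤ] ℤ) (hf : ∀ a b, f a b = f b a)
    (x y : ℚ ⊗[ℤ] H) : fQ f x y = fQ f y x := by
  have hs : f.IsSymm := ⟨fun a b => by simpa using hf a b⟩
  simpa [fQ] using ((LinearMap.BilinForm.IsSymm.baseChange ℚ hs).eq x y)

end Aux

section Psi

variable {H : Type} [AddCommGroup H] (f : H →ₗ[ℤ] H →ₗ[ℤ] ℤ)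

lemma mem_dualLattice {x : ℚ ⊗[ℤ] H} :
    x ∈ dualLattice f ↔ ∀ h : H, ∃ n : ℤ, fQ f x (iotaQ H h) = (n : ℚ) := Iff.rfl

lemma mem_radSub {x : dualLattice f} :
    x ∈ radSub f ↔ ∀ y : dualLattice f, ∃ n : ℤ, fQ f (x : ℚ ⊗[ℤ] H) (y : ℚ ⊗[ℤ] H) = (n : ℚ) :=
  Iff.rfl

lemma iota_mem_dual (h : H) : iotaQ H h ∈ dualLattice f :=
  (mem_dualLattice f).mpr fun k => ⟨f h k, fQ_iota_iota f h k⟩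

/-- the integer values of `fQ f x` on the lattice -/
def dOfFun (x : dualLattice f) (h : H) : ℤ :=
  (((mem_dualLattice f).mp x.2) h).choose

lemma dOfFun_spec (x : dualLattice f) (h : H) :
    fQ f (x : ℚ ⊗[ℤ] H) (iotaQ H h) = (dOfFun f x h : ℚ) :=
  (((mem_dualLattice f).mp x.2) h).choose_spec

/-- `dOfFun` as a linear form -/
def dOf (x : dualLattice f) : H →ₗ[ℤ] ℤ :=
  AddMonoidHom.toIntLinearMap
    { toFun := dOfFun f x
      map_zero' := by
        have h0 := dOfFun_spec f x 0
        rw [map_zero, map_zero] at h0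
        exact_mod_cast h0.symm
      map_add' := fun a b => by
        have h1 := dOfFun_spec f x (a + b)
        have h2 := dOfFun_spec f x a
        have h3 := dOfFun_spec f x b
        rw [map_add, map_add] at h1
        rw [h2, h3] at h1
        exact_mod_cast h1.symm }

lemma dOf_spec (x : dualLattice f) (h : H) :
    fQ f (x : ℚ ⊗[ℤ] H) (iotaQ H h) = ((dOf f x) h : ℚ) :=
  dOfFun_spec f x h

lemma dOf_eq (x : dualLattice f) (d : H →ₗ[ℤ] ℤ)
    (hd : ∀ h : H, fQ f (x : ℚ ⊗[ℤ] H) (iotaQ H h) = (d h : ℚ)) : dOf f x = d := by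
  ext h
  have h1 := dOf_spec f x h
  rw [hd h] at h1
  exact_mod_cast h1.symm

lemma dOf_iota (h : H) (hmem : iotaQ H h ∈ dualLattice f) :
    dOf f ⟨iotaQ H h, hmem⟩ = f h :=
  dOf_eq f _ _ fun k => fQ_iota_iota f h k

/-- psi on representatives -/
def psi0 : dualLattice f →+ ((H →ₗ[ℤ] ℤ) ⧸ LinearMap.range f) where
  toFun x := Submodule.Quotient.mk (dOf f x)
  map_zero' := by
    have : dOf f 0 = 0 := dOf_eq f 0 0 (by simp)
    simp [this]
  map_add' x y := by
    have : dOf f (x + y) = dOf f x + dOf f y := by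
      apply dOf_eq
      intro h
      have h1 := dOf_spec f x h
      have h2 := dOf_spec f y h
      rw [AddSubgroup.coe_add, map_add, LinearMap.add_apply, h1, h2]
      push_cast
      simp
    show Submodule.Quotient.mk (dOf f (x + y)) =
      Submodule.Quotient.mk (dOf f x) + Submodule.Quotient.mk (dOf f y)
    rw [this]
    rfl

lemma psi0_eq_zero_of_mem (x : dualLattice f) (hx : x ∈ latInDual f) : psi0 f x = 0 := by
  obtain ⟨h, hh⟩ := (AddSubgroup.mem_addSubgroupOf).mp hx
  have hd : dOf f x = f h := by
    apply dOf_eq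
    intro k
    have : (x : ℚ ⊗[ℤ] H) = iotaQ H h := by
      rw [← hh]; rfl
    rw [this, fQ_iota_iota]
  show Submodule.Quotient.mk (dOf f x) = 0
  rw [hd, Submodule.Quotient.mk_eq_zero]
  exact ⟨h, rfl⟩

/-- the homomorphism G_f → coker f̂ -/
def psi : Gf f →+ ((H →ₗ[ℤ] ℤ) ⧸ LinearMap.range f) :=
  QuotientAddGroup.lift (latInDual f) (psi0 f) (psi0_eq_zero_of_mem f)

lemma psi_mk (x : dualLattice f) :
    psi f (QuotientAddGroup.mk x) = Submodule.Quotient.mk (dOf f x) := rfl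

end Psi

section Rad

variable {H : Type} [AddCommGroup H] (f : H →ₗ[ℤ] H →ₗ[ℤ] ℤ)

/-- the saturation of the range of f̂ in Hom(H,ℤ) -/
def Lam : Submodule ℤ (H →ₗ[ℤ] ℤ) where
  carrier := {m | ∃ n : ℤ, n ≠ 0 ∧ n • m ∈ LinearMap.range f}
  zero_mem' := ⟨1, one_ne_zero, by simp⟩
  add_mem' := by
    rintro a b ⟨n, hn, hna⟩ ⟨m, hm, hmb⟩
    refine ⟨n * m, mul_ne_zero hn hm, ?_⟩
    rw [smul_add]
    apply Submodule.add_mem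
    · rw [mul_comm, mul_smul]
      exact Submodule.smul_mem _ m hna
    · rw [mul_smul]
      exact Submodule.smul_mem _ n hmb
  smul_mem' := by
    rintro c m ⟨n, hn, hm⟩
    exact ⟨n, hn, by rw [smul_comm]; exact Submodule.smul_mem _ c hm⟩

lemma range_le_Lam (h : H) : f h ∈ Lam f := ⟨1, one_ne_zero, by simpa using ⟨h, rfl⟩⟩

lemma cQ_add' (m m' : H →ₗ[ℤ] ℤ) (v : ℚ ⊗[ℤ] H) :
    cQ (m + m') v = cQ m v + cQ m' v := by
  have := eq_on_lattice (φ := cQ (m + m')) (φ' := cQ m + cQ m')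
    (fun k => by simp [cQ_iota]) v
  simpa using this

lemma cQ_zero' (v : ℚ ⊗[ℤ] H) : cQ (0 : H →ₗ[ℤ] ℤ) v = 0 := by
  have := eq_on_lattice (φ := cQ (0 : H →ₗ[ℤ] ℤ)) (φ' := 0)
    (fun k => by simp [cQ_iota]) v
  simpa using this

variable [Module.Free ℤ H] [Module.Finite ℤ H]

lemma rad_to_range (hf : ∀ a b, f a b = f b a) (x : dualLattice f) (hx : x ∈ radSub f) :
    ∃ h : H, dOf f x = f h := by
  classical
  have hx' := (mem_radSub f).mp hx
  -- integrality of cQ m x for m in Lam f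
  have int_on_Lam : ∀ m : H →ₗ[ℤ] ℤ, m ∈ Lam f →
      ∃ z : ℤ, cQ m (x : ℚ ⊗[ℤ] H) = (z : ℚ) := by
    rintro m ⟨n, hn, h, hh⟩
    -- hh : f h = n • m
    have hq : (n : ℚ) ≠ 0 := Int.cast_ne_zero.mpr hn
    have happ : ∀ k : H, (f h) k = n * m k := fun k => by
      rw [hh]; simp [smul_eq_mul]
    set y : ℚ ⊗[ℤ] H := (n : ℚ)⁻¹ • iotaQ H h with hy_def
    have hval : ∀ k : H, fQ f y (iotaQ H k) = (m k : ℚ) := by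
      intro k
      rw [hy_def, map_smul, LinearMap.smul_apply, fQ_iota_iota, happ k]
      push_cast
      field_simp
      rw [smul_eq_mul, one_div, inv_mul_cancel_left₀ hq]
    have hy : y ∈ dualLattice f := (mem_dualLattice f).mpr fun k => ⟨m k, hval k⟩
    have e1 : cQ m (x : ℚ ⊗[ℤ] H) = fQ f y (x : ℚ ⊗[ℤ] H) :=
      eq_on_lattice (fun k => by rw [cQ_iota, hval k]) _
    obtain ⟨z, hz⟩ := hx' ⟨y, hy⟩
    exact ⟨z, by rw [e1, fQ_symm f hf, hz]⟩
  -- the quotient by Lam f is free, so the inclusion splits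
  haveI : NoZeroSMulDivisors ℤ ((H →ₗ[ℤ] ℤ) ⧸ Lam f) := by
    refine ⟨fun {c} {q} hcq => ?_⟩
    by_cases hc : c = 0
    · exact Or.inl hc
    refine Or.inr ?_
    obtain ⟨m, rfl⟩ := Submodule.Quotient.mk_surjective _ q
    rw [← Submodule.Quotient.mk_smul, Submodule.Quotient.mk_eq_zero] at hcq
    rw [Submodule.Quotient.mk_eq_zero]
    obtain ⟨n, hn, hnm⟩ := hcq
    exact ⟨n * c, mul_ne_zero hn hc, by rwa [mul_smul]⟩
  haveI : Module.Finite ℤ ((H →ₗ[ℤ] ℤ) ⧸ Lam f) :=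
    Module.Finite.of_surjective (Lam f).mkQ (Submodule.mkQ_surjective _)
  haveI : Module.Free ℤ ((H →ₗ[ℤ] ℤ) ⧸ Lam f) := Module.free_of_finite_type_torsion_free'
  obtain ⟨sec, hsec⟩ := Module.projective_lifting_property (Lam f).mkQ
    (LinearMap.id) (Submodule.mkQ_surjective _)
  have hmem : ∀ m : H →ₗ[ℤ] ℤ, m - sec ((Lam f).mkQ m) ∈ Lam f := by
    intro m
    have h0 : (Lam f).mkQ (m - sec ((Lam f).mkQ m)) = 0 := by
      rw [map_sub]
      have := LinearMap.congr_fun hsec ((Lam f).mkQ m)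
      simp only [LinearMap.coe_comp, Function.comp_apply, LinearMap.id_apply] at this
      rw [this, sub_self]
    rwa [Submodule.mkQ_apply, Submodule.Quotient.mk_eq_zero] at h0
  have hval : ∀ m : H →ₗ[ℤ] ℤ,
      ∃ z : ℤ, cQ (m - sec ((Lam f).mkQ m)) (x : ℚ ⊗[ℤ] H) = (z : ℚ) :=
    fun m => int_on_Lam _ (hmem m)
  choose zf hzf using hval
  have harg : ∀ m m' : H →ₗ[ℤ] ℤ,
      (m + m') - sec ((Lam f).mkQ (m + m')) =
        (m - sec ((Lam f).mkQ m)) + (m' - sec ((Lam f).mkQ m')) := by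
    intro m m'
    rw [map_add, map_add]
    abel
  have zf_add : ∀ m m' : H →ₗ[ℤ] ℤ, zf (m + m') = zf m + zf m' := by
    intro m m'
    have : ((zf (m + m') : ℤ) : ℚ) = ((zf m + zf m' : ℤ) : ℚ) := by
      rw [← hzf]
      push_cast
      rw [← hzf, ← hzf, ← cQ_add', harg]
    exact_mod_cast this
  have zf_zero : zf 0 = 0 := by
    have : ((zf 0 : ℤ) : ℚ) = ((0 : ℤ) : ℚ) := by
      rw [← hzf]
      simp [cQ_zero']
    exact_mod_cast this
  set ξ : (H →ₗ[ℤ] ℤ) →ₗ[ℤ] ℤ := AddMonoidHom.toIntLinearMap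
    { toFun := zf, map_zero' := zf_zero, map_add' := zf_add } with hξ
  set h₀ : H := (Module.evalEquiv ℤ H).symm ξ with hh₀
  refine ⟨h₀, dOf_eq f x (f h₀) ?_⟩
  intro k
  have hfk : (Lam f).mkQ (f k) = 0 := by
    rw [Submodule.mkQ_apply, Submodule.Quotient.mk_eq_zero]
    exact range_le_Lam f k
  have e2 : fQ f (x : ℚ ⊗[ℤ] H) (iotaQ H k) = cQ (f k) (x : ℚ ⊗[ℤ] H) := by
    rw [fQ_symm f hf]
    exact eq_on_lattice (fun j => by rw [fQ_iota_iota, cQ_iota]) _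
  have e3 : cQ (f k) (x : ℚ ⊗[ℤ] H) = (zf (f k) : ℚ) := by
    rw [← hzf (f k), hfk, map_zero, sub_zero]
  have e4 : zf (f k) = (f h₀) k := by
    have := Module.apply_evalEquiv_symm_apply (R := ℤ) (M := H) (f k) ξ
    rw [← hh₀] at this
    rw [hf h₀ k, this]
    rfl
  rw [e2, e3, e4]

lemma range_to_rad (hf : ∀ a b, f a b = f b a) (x : dualLattice f) (h : H)
    (hd : dOf f x = f h) : x ∈ radSub f := by
  rw [mem_radSub]
  intro y
  have e : fQ f (x : ℚ ⊗[ℤ] H) (y : ℚ ⊗[ℤ] H) = fQ f (iotaQ H h) (y : ℚ ⊗[ℤ] H) :=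
    eq_on_lattice (φ := fQ f (x : ℚ ⊗[ℤ] H)) (φ' := fQ f (iotaQ H h))
      (fun k => by rw [dOf_spec f x k, hd, fQ_iota_iota]) _
  obtain ⟨n, hn⟩ := (mem_dualLattice f).mp y.2 h
  exact ⟨n, by rw [e, fQ_symm f hf, hn]⟩

end Rad

-- STATEMENT 14
theorem stmt14 {H : Type} [AddCommGroup H] [Module.Free ℤ H] [Module.Finite ℤ H]
    (f : H →ₗ[ℤ] H →ₗ[ℤ] ℤ) (hf : ∀ x y, f x y = f y x) :
    ∃ ψ : Gf f →+ ((H →ₗ[ℤ] ℤ) ⧸ LinearMap.range f),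
      (∀ (x : dualLattice f) (d : H →ₗ[ℤ] ℤ),
        (∀ h : H, fQ f x (iotaQ H h) = (d h : ℚ)) →
        ψ (QuotientAddGroup.mk x) = Submodule.Quotient.mk d) ∧
      (∀ g : Gf f, ψ g ∈ Submodule.torsion ℤ ((H →ₗ[ℤ] ℤ) ⧸ LinearMap.range f)) ∧
      (∀ t ∈ Submodule.torsion ℤ ((H →ₗ[ℤ] ℤ) ⧸ LinearMap.range f), ∃ g : Gf f, ψ g = t) ∧
      (∀ x : dualLattice f, ψ (QuotientAddGroup.mk x) = 0 ↔ x ∈ radSub f) ∧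
      (∃ s : (Submodule.torsion ℤ ((H →ₗ[ℤ] ℤ) ⧸ LinearMap.range f)) →+ Gf f,
        ∀ t, ψ (s t) = (t : (H →ₗ[ℤ] ℤ) ⧸ LinearMap.range f)) := by
  classical
  -- conjunct 1
  have h1 : ∀ (x : dualLattice f) (d : H →ₗ[ℤ] ℤ),
      (∀ h : H, fQ f (x : ℚ ⊗[ℤ] H) (iotaQ H h) = (d h : ℚ)) →
      psi f (QuotientAddGroup.mk x) = Submodule.Quotient.mk d := by
    intro x d hd
    rw [psi_mk, dOf_eq f x d hd]
  -- conjunct 2 : torsion values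
  have h2 : ∀ g : Gf f,
      psi f g ∈ Submodule.torsion ℤ ((H →ₗ[ℤ] ℤ) ⧸ LinearMap.range f) := by
    intro g
    refine QuotientAddGroup.induction_on g ?_
    intro x
    obtain ⟨n, hn, h, hh⟩ := exists_denom (x : ℚ ⊗[ℤ] H)
    refine ⟨⟨n, mem_nonZeroDivisors_of_ne_zero hn⟩, ?_⟩
    have hkey : n • dOf f x = f h := by
      ext k
      have h2' : fQ f ((n:ℚ) • (x : ℚ ⊗[ℤ] H)) (iotaQ H k) = ((n * dOf f x k : ℤ) : ℚ) := by
        rw [map_smul, LinearMap.smul_apply, dOf_spec f x k, smul_eq_mul]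
        push_cast
        ring
      rw [hh, fQ_iota_iota] at h2'
      have h3' : f h k = n * dOf f x k := by exact_mod_cast h2'
      simp only [LinearMap.smul_apply, smul_eq_mul]
      exact h3'.symm
    have : (n : ℤ) • psi f (QuotientAddGroup.mk x) = 0 := by
      rw [psi_mk, ← Submodule.Quotient.mk_smul, hkey, Submodule.Quotient.mk_eq_zero]
      exact ⟨h, rfl⟩
    rw [Submonoid.mk_smul]
    exact this
  -- conjunct 3 : surjectivity onto the torsion
  have h3 : ∀ t ∈ Submodule.torsion ℤ ((H →ₗ[ℤ] ℤ) ⧸ LinearMap.range f),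
      ∃ g : Gf f, psi f g = t := by
    rintro t ⟨⟨n, hn0⟩, hnt⟩
    have hn : n ≠ 0 := mem_nonZeroDivisors_iff_ne_zero.mp hn0
    obtain ⟨d, rfl⟩ := Submodule.Quotient.mk_surjective _ t
    rw [Submonoid.mk_smul, ← Submodule.Quotient.mk_smul, Submodule.Quotient.mk_eq_zero] at hnt
    obtain ⟨h, hh⟩ := hnt
    have hq : (n : ℚ) ≠ 0 := Int.cast_ne_zero.mpr hn
    have happ : ∀ k, f h k = n * d k := fun k => by
      rw [hh]; simp [smul_eq_mul]
    have hval : ∀ k, fQ f ((n:ℚ)⁻¹ • iotaQ H h) (iotaQ H k) = (d k : ℚ) := by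
      intro k
      rw [map_smul, LinearMap.smul_apply, fQ_iota_iota, happ k]
      push_cast
      field_simp
      rw [smul_eq_mul, one_div, inv_mul_cancel_left₀ hq]
    have hmem : (n:ℚ)⁻¹ • iotaQ H h ∈ dualLattice f :=
      (mem_dualLattice f).mpr fun k => ⟨d k, hval k⟩
    exact ⟨QuotientAddGroup.mk ⟨_, hmem⟩, h1 ⟨_, hmem⟩ d hval⟩
  -- conjunct 4 : kernel = radical
  have h4 : ∀ x : dualLattice f, psi f (QuotientAddGroup.mk x) = 0 ↔ x ∈ radSub f := by
    intro x
    constructor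
    · intro hx0
      rw [psi_mk, Submodule.Quotient.mk_eq_zero] at hx0
      obtain ⟨h, hh⟩ := hx0
      exact range_to_rad f hf x h hh.symm
    · intro hx
      obtain ⟨h, hh⟩ := rad_to_range f hf x hx
      rw [psi_mk, hh, Submodule.Quotient.mk_eq_zero]
      exact ⟨h, rfl⟩
  -- divisibility of the kernel
  have div_ex0 : ∀ (g : Gf f) (n : ℤ), n ≠ 0 → psi f g = 0 →
      ∃ g' : Gf f, psi f g' = 0 ∧ n • g' = g := by
    intro g n hn
    refine QuotientAddGroup.induction_on g ?_
    intro x hg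
    obtain ⟨h, hd⟩ : ∃ h : H, dOf f x = f h := by
      rw [psi_mk, Submodule.Quotient.mk_eq_zero] at hg
      obtain ⟨h, hh⟩ := hg
      exact ⟨h, hh.symm⟩
    have hq : (n : ℚ) ≠ 0 := Int.cast_ne_zero.mpr hn
    set y : ℚ ⊗[ℤ] H := iotaQ H h + (n:ℚ)⁻¹ • ((x : ℚ ⊗[ℤ] H) - iotaQ H h) with hy_def
    have hval : ∀ k, fQ f y (iotaQ H k) = ((f h k : ℤ) : ℚ) := by
      intro k
      rw [hy_def, map_add, LinearMap.add_apply, map_smul, LinearMap.smul_apply, map_sub,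
        LinearMap.sub_apply, fQ_iota_iota, dOf_spec f x k, hd]
      simp
    have hymem : y ∈ dualLattice f := (mem_dualLattice f).mpr fun k => ⟨f h k, hval k⟩
    have hy0 : psi f (QuotientAddGroup.mk ⟨y, hymem⟩) = 0 := by
      rw [psi_mk, dOf_eq f ⟨y, hymem⟩ (f h) hval, Submodule.Quotient.mk_eq_zero]
      exact ⟨h, rfl⟩
    refine ⟨QuotientAddGroup.mk ⟨y, hymem⟩, hy0, ?_⟩
    show n • (QuotientAddGroup.mk (⟨y, hymem⟩ : dualLattice f) : Gf f) = QuotientAddGroup.mk x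
    rw [← QuotientAddGroup.mk_zsmul]
    rw [QuotientAddGroup.eq]
    refine ⟨(-(n - 1)) • h, ?_⟩
    have hcoe : ((n • (⟨y, hymem⟩ : dualLattice f) : dualLattice f) : ℚ ⊗[ℤ] H)
        = n • y := by
      rw [AddSubgroupClass.coe_zsmul]
    have hny : n • y = iotaQ H (n • h) + ((x : ℚ ⊗[ℤ] H) - iotaQ H h) := by
      rw [hy_def, ← Int.cast_smul_eq_zsmul ℚ n, smul_add, smul_inv_smul₀ hq, map_smul,
        Int.cast_smul_eq_zsmul ℚ n]
    show iotaQ H ((-(n - 1)) • h) =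
      ((-(n • (⟨y, hymem⟩ : dualLattice f)) + x : dualLattice f) : ℚ ⊗[ℤ] H)
    rw [AddSubgroup.coe_add, AddSubgroup.coe_neg, hcoe, hny, map_smul, map_smul,
      show (-(n - 1) : ℤ) = 1 - n from by ring, sub_smul, one_smul]
    abel
  have div_ex : ∀ (a : ↥((psi f).ker)) (n : ℤ), n ≠ 0 →
      ∃ b : ↥((psi f).ker), n • b = a := by
    intro a n hn
    obtain ⟨g', hg'0, hg'⟩ := div_ex0 (a : Gf f) n hn (AddMonoidHom.mem_ker.mp a.2)
    refine ⟨⟨g', AddMonoidHom.mem_ker.mpr hg'0⟩, ?_⟩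
    apply Subtype.ext
    rw [AddSubgroupClass.coe_zsmul]
    exact hg'
  haveI hdiv : DivisibleBy ↥((psi f).ker) ℤ :=
    { div := fun a n => if hn : n = 0 then 0 else (div_ex a n hn).choose
      div_zero := fun a => dif_pos rfl
      div_cancel := fun {n} a hn => by
        rw [dif_neg hn]
        exact (div_ex a n hn).choose_spec }
  obtain ⟨ρ, hρ⟩ := (Module.Baer.of_divisible ↥((psi f).ker)).extension_property_addMonoidHom
    ((psi f).ker.subtype) (psi f).ker.subtype_injective (AddMonoidHom.id _)
  -- the torsion-valued version of psi
  let τ : Gf f →+ ↥(Submodule.torsion ℤ ((H →ₗ[ℤ] ℤ) ⧸ LinearMap.range f)) :=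
    { toFun := fun g => ⟨psi f g, h2 g⟩
      map_zero' := Subtype.ext (by simp)
      map_add' := fun a b => Subtype.ext (by simp) }
  have hτsurj : Function.Surjective τ := by
    intro t
    obtain ⟨g, hg⟩ := h3 t t.2
    exact ⟨g, Subtype.ext hg⟩
  let σ : Gf f →+ Gf f :=
    { toFun := fun g => g - ((psi f).ker.subtype (ρ g))
      map_zero' := by simp
      map_add' := fun a b => by
        simp only [map_add, AddSubgroup.coe_add]
        abel }
  have hσker : ∀ g ∈ τ.ker, σ g = 0 := by
    intro g hg
    rw [AddMonoidHom.mem_ker] at hg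
    have hgker : g ∈ (psi f).ker := by
      rw [AddMonoidHom.mem_ker]
      have hval : psi f g = ((0 : ↥(Submodule.torsion ℤ ((H →ₗ[ℤ] ℤ) ⧸ LinearMap.range f))) :
          ((H →ₗ[ℤ] ℤ) ⧸ LinearMap.range f)) := congrArg Subtype.val hg
      simpa using hval
    have hρg : ρ g = ⟨g, hgker⟩ := by
      have := DFunLike.congr_fun hρ ⟨g, hgker⟩
      simpa using this
    show g - ((psi f).ker.subtype (ρ g)) = 0
    rw [hρg]
    simp
  choose li hli using hτsurj
  have hker_of : ∀ {g : Gf f}, τ g = 0 → σ g = 0 := fun {g} hg =>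
    hσker g (AddMonoidHom.mem_ker.mpr hg)
  have hadd : ∀ a b, σ (li (a + b)) = σ (li a) + σ (li b) := by
    intro a b
    have hk : τ (li (a + b) - (li a + li b)) = 0 := by
      rw [map_sub, map_add, hli, hli, hli, sub_self]
    have h0 := hker_of hk
    rw [map_sub, map_add, sub_eq_zero] at h0
    exact h0
  have hzero : σ (li 0) = 0 := hker_of (hli 0)
  refine ⟨psi f, h1, h2, h3, h4,
    ⟨{ toFun := fun t => σ (li t), map_zero' := hzero, map_add' := hadd }, ?_⟩⟩
  intro t
  show psi f (σ (li t)) = ↑t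
  show psi f (li t - ((ρ (li t) : ↥((psi f).ker)) : Gf f)) = ↑t
  rw [map_sub, AddMonoidHom.mem_ker.mp (ρ (li t)).2, sub_zero]
  exact congrArg Subtype.val (hli t)
end
end
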